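/- Fix a real γ ≥ 2 and for each natural number t set E_err(t) = (1 − √((t + γ)/(t + 1 + γ))) · γ/(t + γ) + γ/(t + 1 + γ) − γ/(t + γ). Then (t + γ)² · E_err(t) converges to −γ/2 as t → ∞. -/

import Mathlib

open Filter

/-- **Asymptotics of the error coefficient.** For `γ ≥ 2` and
`E_err t = (1 − √((t+γ)/(t+1+γ))) · γ/(t+γ) + γ/(t+1+γ) − γ/(t+γ)`, the rescaled error
`(t+γ)² · E_err t` converges to `−γ/2` as `t → ∞`. -/
theorem error_coefficient_asymptotics (γ : ℝ) (hγ : 2 ≤ γ) :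
    Tendsto (fun t : ℕ =>
        ((t : ℝ) + γ) ^ 2 *
          ((1 - Real.sqrt (((t : ℝ) + γ) / ((t : ℝ) + 1 + γ))) * (γ / ((t : ℝ) + γ))
            + γ / ((t : ℝ) + 1 + γ) - γ / ((t : ℝ) + γ)))
      atTop (nhds (-γ / 2)) := by
  have hγ0 : (0:ℝ) < γ := lt_of_lt_of_le (by norm_num) hγ
  set u : ℕ → ℝ := fun t => ((t : ℝ) + γ) / ((t : ℝ) + 1 + γ) with hu_def
  have hden : ∀ t : ℕ, (0:ℝ) < (t : ℝ) + 1 + γ := fun t => by positivity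
  have hnum : ∀ t : ℕ, (0:ℝ) < (t : ℝ) + γ := fun t => by positivity
  have hu : Tendsto u atTop (nhds 1) := by
    have h1 : Tendsto (fun t : ℕ => ((t : ℝ) + 1 + γ)) atTop atTop :=
      tendsto_atTop_add_const_right _ γ
        (tendsto_atTop_add_const_right _ 1 tendsto_natCast_atTop_atTop)
    have h2 : Tendsto (fun t : ℕ => ((t : ℝ) + 1 + γ)⁻¹) atTop (nhds 0) :=
      h1.inv_tendsto_atTop
    have h3 : Tendsto (fun t : ℕ => 1 - ((t : ℝ) + 1 + γ)⁻¹) atTop (nhds (1 - 0)) :=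
      tendsto_const_nhds.sub h2
    rw [sub_zero] at h3
    refine h3.congr fun t => ?_
    have := (hden t).ne'
    field_simp [hu_def]
    have hut : u t * ((t : ℝ) + 1 + γ) = (t : ℝ) + γ := by
      simp only [hu_def]; exact div_mul_cancel₀ _ this
    linear_combination -hut
  have hsqrt : Tendsto (fun t => Real.sqrt (u t)) atTop (nhds 1) := by
    have := hu.sqrt
    rwa [Real.sqrt_one] at this
  have hinv : Tendsto (fun t => (1 + Real.sqrt (u t))⁻¹) atTop (nhds (2⁻¹)) := by
    have h : Tendsto (fun t => 1 + Real.sqrt (u t)) atTop (nhds 2) := by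
      have h2 : Tendsto (fun t => (1:ℝ) + Real.sqrt (u t)) atTop (nhds (1 + 1)) :=
        tendsto_const_nhds.add hsqrt
      norm_num at h2
      exact h2
    exact h.inv₀ (by norm_num)
  have hmain : Tendsto (fun t => γ * u t * ((1 + Real.sqrt (u t))⁻¹ - 1)) atTop
      (nhds (γ * 1 * (2⁻¹ - 1))) :=
    (tendsto_const_nhds.mul hu).mul (hinv.sub tendsto_const_nhds)
  have hval : γ * 1 * ((2:ℝ)⁻¹ - 1) = -γ / 2 := by ring
  rw [hval] at hmain
  refine hmain.congr fun t => ?_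
  have hx := hnum t
  have hy := hden t
  have hs0 : 0 ≤ u t := le_of_lt (div_pos hx hy)
  set r := Real.sqrt (u t) with hr_def
  have hr0 : 0 ≤ r := Real.sqrt_nonneg _
  have hr2 : r ^ 2 = u t := Real.sq_sqrt hs0
  have hrne : (1 : ℝ) + r ≠ 0 := by positivity
  have hr2' : r ^ 2 * ((t : ℝ) + 1 + γ) = (t : ℝ) + γ := by
    rw [hr2, hu_def]
    field_simp
  have hrpos : 0 < r := Real.sqrt_pos.mpr (div_pos hx hy)
  have hrel : ((t : ℝ) + 1 + γ) * (1 - r ^ 2) = 1 := by linear_combination -hr2'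
  have hinv1 : (1 + r)⁻¹ = ((t : ℝ) + 1 + γ) * (1 - r) := by
    refine inv_eq_of_mul_eq_one_right ?_
    linear_combination hrel
  rw [← hr2, hinv1, ← hr2']
  have expand : (r ^ 2 * ((t : ℝ) + 1 + γ)) ^ 2 *
      ((1 - r) * (γ / (r ^ 2 * ((t : ℝ) + 1 + γ))) + γ / ((t : ℝ) + 1 + γ)
        - γ / (r ^ 2 * ((t : ℝ) + 1 + γ))) =
      γ * (r ^ 2 * ((t : ℝ) + 1 + γ)) * (1 - r) + γ * r ^ 4 * ((t : ℝ) + 1 + γ)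
        - γ * (r ^ 2 * ((t : ℝ) + 1 + γ)) := by
    field_simp
  rw [expand]
  linear_combination (γ * r ^ 2) * hrel
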